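/- Let G = (V, E) be a connected claw-free simple graph that contains a simplicial clique. Then for every nonempty subset U ⊆ V, the induced subgraph G[U] is claw-free and every connected component of G[U] contains a simplicial clique. -/

import Mathlib

/-- A claw-free graph: no vertex is adjacent to three pairwise distinct, pairwise
non-adjacent vertices. -/
def ClawFree {V : Type*} (G : SimpleGraph V) : Prop :=
  ∀ v a b c : V, G.Adj v a → G.Adj v b → G.Adj v c →
    a ≠ b → a ≠ c → b ≠ c → ¬ G.Adj a b → ¬ G.Adj a c → ¬ G.Adj b c → False

/-- A simplicial clique: a nonempty clique `K` such that for every `x ∈ K` the set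
`N(x) \ K` is a clique. -/
def IsSimplicialClique {V : Type*} (G : SimpleGraph V) (K : Set V) : Prop :=
  K.Nonempty ∧ G.IsClique K ∧ ∀ x ∈ K, G.IsClique (G.neighborSet x \ K)

section Aux

variable {V : Type*} (G : SimpleGraph V)

/-- Reachability within a set of vertices. -/
def GCon (S : Set V) (x y : V) : Prop :=
  Relation.ReflTransGen (fun a b => a ∈ S ∧ b ∈ S ∧ G.Adj a b) x y

/-- The "component" of `t` within `S`. -/
def GComp (S : Set V) (t : V) : Set V := {x | x ∈ S ∧ GCon G S x t}

/-- A set is connected (within itself). -/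
def GConnOn (S : Set V) : Prop := ∀ a ∈ S, ∀ b ∈ S, GCon G S a b

/-- A simplicial clique of the subgraph induced on `W`, expressed with sets in `V`. -/
def GRelSimp (W K : Set V) : Prop :=
  K.Nonempty ∧ K ⊆ W ∧ G.IsClique K ∧
    ∀ x ∈ K, G.IsClique {y | y ∈ W ∧ G.Adj x y ∧ y ∉ K}

variable {G}

lemma GCon.symm {S : Set V} {a b : V} (h : GCon G S a b) : GCon G S b a :=
  @Std.Symm.symm _ _ (@Relation.ReflTransGen.stdSymm _ _ ⟨fun _ _ ⟨hx, hy, hadj⟩ => ⟨hy, hx, hadj.symm⟩⟩) _ _ h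

lemma GCon.mono {S S' : Set V} (hS : S ⊆ S') {a b : V} (h : GCon G S a b) :
    GCon G S' a b :=
  Relation.ReflTransGen.mono (fun _ _ ⟨hx, hy, hadj⟩ => ⟨hS hx, hS hy, hadj⟩) _ _ h

lemma comp_closed {S : Set V} {t a b : V} (ha : a ∈ GComp G S t) (hb : b ∈ S)
    (hadj : G.Adj a b) : b ∈ GComp G S t :=
  ⟨hb, Relation.ReflTransGen.head ⟨hb, ha.1, hadj.symm⟩ ha.2⟩

lemma con_lift {S : Set V} {t a : V} (h : GCon G S a t) (ha : a ∈ S) :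
    GCon G (GComp G S t) a t := by
  induction h using Relation.ReflTransGen.head_induction_on with
  | refl => exact Relation.ReflTransGen.refl
  | head h' hrest ih =>
    obtain ⟨haS, hcS, hadj⟩ := h'
    exact Relation.ReflTransGen.head
      ⟨⟨haS, Relation.ReflTransGen.head ⟨haS, hcS, hadj⟩ hrest⟩, ⟨hcS, hrest⟩, hadj⟩
      (ih hcS)

/-- From a walk within `W` from `a` to `v ≠ a`, extract a neighbour `w` of `v`
reachable from `a` avoiding `v`. -/
lemma con_to_del {W : Set V} {v a : V} (h : GCon G W a v) (hav : a ≠ v) :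
    ∃ w, w ∈ W ∧ w ≠ v ∧ G.Adj w v ∧ GCon G (W \ {v}) a w := by
  induction h using Relation.ReflTransGen.head_induction_on with
  | refl => exact absurd rfl hav
  | @head a c h' hrest ih =>
    obtain ⟨haW, hcW, hadj⟩ := h'
    by_cases hcv : c = v
    · subst hcv
      exact ⟨a, haW, hav, hadj, Relation.ReflTransGen.refl⟩
    · obtain ⟨w, hwW, hwv, hwadj, hwcon⟩ := ih hcv
      exact ⟨w, hwW, hwv, hwadj,
        Relation.ReflTransGen.head ⟨⟨haW, hav⟩, ⟨hcW, hcv⟩, hadj⟩ hwcon⟩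

/-- Key lemma: any component of `G[W] - v` contains a simplicial clique,
provided `G[W]` is connected and has one. -/
lemma lemA (hcf : ClawFree G) {W K : Set V} (hW : GConnOn G W)
    (hK : GRelSimp G W K) {v d0 : V} (hv : v ∈ W) (hd0 : d0 ∈ W) (hdv : d0 ≠ v) :
    ∃ K', GRelSimp G (GComp G (W \ {v}) d0) K' := by
  obtain ⟨hKne, hKW, hKcl, hKsimp⟩ := hK
  set D : Set V := GComp G (W \ {v}) d0 with hD
  have hDW : D ⊆ W \ {v} := fun x hx => hx.1
  by_cases hint : (K ∩ D).Nonempty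
  · -- K minus v is a simplicial clique of D
    obtain ⟨k1, hk1K, hk1D⟩ := hint
    have hk1v : k1 ≠ v := (hDW hk1D).2
    refine ⟨K \ {v}, ⟨k1, hk1K, hk1v⟩, ?_, hKcl.subset Set.diff_subset, ?_⟩
    · intro k hk
      rcases eq_or_ne k k1 with rfl | hne
      · exact hk1D
      · exact comp_closed hk1D ⟨hKW hk.1, hk.2⟩ (hKcl hk1K hk.1 (Ne.symm hne))
    · intro x hx
      refine (hKsimp x hx.1).subset ?_
      rintro y ⟨hyD, hyadj, hyK⟩
      refine ⟨(hDW hyD).1, hyadj, fun hyKmem => hyK ⟨hyKmem, (hDW hyD).2⟩⟩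
  · -- the neighbourhood of v within D is a simplicial clique of D
    have hKD : ∀ k ∈ K, k ∉ D := fun k hk hkD => hint ⟨k, hk, hkD⟩
    -- a neighbour of v in D
    obtain ⟨w0, hw0W, hw0v, hw0adj, hw0con⟩ := con_to_del (hW d0 hd0 v hv) hdv
    have hw0D : w0 ∈ D := ⟨⟨hw0W, hw0v⟩, hw0con.symm⟩
    -- in the case K ≠ {v}, a neighbour of v outside D
    have houtside : (∃ k ∈ K, k ≠ v) →
        ∃ w, w ∈ W ∧ w ≠ v ∧ G.Adj v w ∧ w ∉ D := by
      rintro ⟨k, hkK, hkv⟩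
      obtain ⟨w, hwW, hwv, hwadj, hwcon⟩ := con_to_del (hW k (hKW hkK) v hv) hkv
      refine ⟨w, hwW, hwv, hwadj.symm, fun hwD => ?_⟩
      exact hKD k hkK ⟨⟨hKW hkK, hkv⟩, hwcon.trans hwD.2⟩
    have hclique : G.IsClique {y | y ∈ D ∧ G.Adj v y} := by
      intro a ha b hb hab
      by_contra hnadj
      have haD := ha.1
      have hbD := hb.1
      by_cases hKv : ∀ k ∈ K, k = v
      · -- K = {v}; use simpliciality of v
        obtain ⟨k, hk⟩ := hKne
        have hvK : v ∈ K := hKv k hk ▸ hk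
        have := hKsimp v hvK ⟨(hDW haD).1, ha.2, fun haK => (hDW haD).2 (hKv a haK)⟩
          ⟨(hDW hbD).1, hb.2, fun hbK => (hDW hbD).2 (hKv b hbK)⟩ hab
        exact hnadj this
      · push_neg at hKv
        obtain ⟨w, hwW, hwv, hwadj, hwD⟩ := houtside hKv
        have hnaw : ¬ G.Adj a w := fun h => hwD (comp_closed haD ⟨hwW, hwv⟩ h)
        have hnbw : ¬ G.Adj b w := fun h => hwD (comp_closed hbD ⟨hwW, hwv⟩ h)
        have haw : a ≠ w := fun h => hwD (h ▸ haD)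
        have hbw : b ≠ w := fun h => hwD (h ▸ hbD)
        exact hcf v a b w ha.2 hb.2 hwadj hab haw hbw hnadj hnaw hnbw
    refine ⟨{y | y ∈ D ∧ G.Adj v y}, ⟨w0, hw0D, hw0adj.symm⟩, fun y hy => hy.1,
      hclique, ?_⟩
    intro x hx a ha b hb hab
    by_contra hnadj
    have hnav : ¬ G.Adj a v := fun h =>
      ha.2.2 ⟨ha.1, h.symm⟩
    have hnbv : ¬ G.Adj b v := fun h =>
      hb.2.2 ⟨hb.1, h.symm⟩
    have hav : a ≠ v := fun h => (hDW ha.1).2 h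
    have hbv : b ≠ v := fun h => (hDW hb.1).2 h
    exact hcf x a b v ha.2.1 hb.2.1 hx.2.symm hab hav hbv hnadj hnav hnbv

/-- Main induction: a connected subset of a connected set with a simplicial clique
has a simplicial clique. -/
lemma mainInd : ∀ (n : ℕ) (W C : Set V), W.Finite → W.ncard ≤ n →
    ClawFree G → GConnOn G W → (∃ K, GRelSimp G W K) →
    C.Nonempty → C ⊆ W → GConnOn G C → ∃ K, GRelSimp G C K := by
  intro n
  induction n with
  | zero =>
    intro W C hWfin hcard _ _ _ hCne hCW _
    obtain ⟨c, hc⟩ := hCne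
    have : W.Nonempty := ⟨c, hCW hc⟩
    have := Set.ncard_pos hWfin |>.mpr this
    omega
  | succ n ih =>
    intro W C hWfin hcard hcf hW hK hCne hCW hC
    by_cases hWC : W ⊆ C
    · obtain ⟨K, hK⟩ := hK
      have hEq : C = W := Set.Subset.antisymm hCW hWC
      exact ⟨K, hEq ▸ hK⟩
    · rw [Set.not_subset] at hWC
      obtain ⟨v, hvW, hvC⟩ := hWC
      obtain ⟨d0, hd0C⟩ := hCne
      have hd0W : d0 ∈ W := hCW hd0C
      have hd0v : d0 ≠ v := fun h => hvC (h ▸ hd0C)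
      set D : Set V := GComp G (W \ {v}) d0 with hD
      have hDW : D ⊆ W \ {v} := fun x hx => hx.1
      have hCD : C ⊆ D := by
        intro c hc
        have hcWv : c ∈ W \ {v} := ⟨hCW hc, fun h => hvC (h ▸ hc)⟩
        refine ⟨hcWv, ?_⟩
        have hsub : C ⊆ W \ {v} := fun x hx => ⟨hCW hx, fun h => hvC (h ▸ hx)⟩
        exact (hC c hc d0 hd0C).mono hsub
      have hd0D : d0 ∈ D := hCD hd0C
      have hDconn : GConnOn G D := by
        intro a ha b hb
        have h1 : GCon G D a d0 := con_lift ha.2 ha.1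
        have h2 : GCon G D b d0 := con_lift hb.2 hb.1
        exact h1.trans h2.symm
      have hDK : ∃ K', GRelSimp G D K' := lemA hcf hW hK.choose_spec hvW hd0W hd0v
      refine ih D C (hWfin.subset (hDW.trans Set.diff_subset)) ?_ hcf hDconn hDK ⟨d0, hd0C⟩ hCD hC
      have h1 : (W \ {v}).ncard = W.ncard - 1 := Set.ncard_diff_singleton_of_mem hvW
      have h2 : D.ncard ≤ (W \ {v}).ncard :=
        Set.ncard_le_ncard hDW (hWfin.subset Set.diff_subset)
      have h3 : 1 ≤ W.ncard := (Set.ncard_pos hWfin).mpr ⟨v, hvW⟩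
      omega

lemma reachable_of_con {U : Set V} {a b : V} (h : GCon G U a b) :
    ∀ (ha : a ∈ U) (hb : b ∈ U), (G.induce U).Reachable ⟨a, ha⟩ ⟨b, hb⟩ := by
  induction h with
  | refl => exact fun _ _ => SimpleGraph.Reachable.refl _
  | tail hrest hedge ih =>
    intro ha hb
    obtain ⟨hcU, hbU, hadj⟩ := hedge
    exact (ih ha hcU).trans (SimpleGraph.Adj.reachable (by exact hadj))

lemma con_univ_of_reachable {a b : V} (h : G.Reachable a b) :
    GCon G Set.univ a b := by
  obtain ⟨p⟩ := h
  induction p with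
  | nil => exact Relation.ReflTransGen.refl
  | cons h p ih =>
    exact Relation.ReflTransGen.head ⟨Set.mem_univ _, Set.mem_univ _, h⟩ ih

end Aux

/-- If `G` is a connected claw-free graph containing a simplicial
clique, then for every nonempty `U ⊆ V` the induced subgraph `G[U]` is claw-free and
each of its connected components contains a simplicial clique of `G[U]`. -/
theorem stmt10 {V : Type*} [Fintype V] (G : SimpleGraph V)
    (hconn : G.Connected) (hcf : ClawFree G)
    (hsimp : ∃ K : Set V, IsSimplicialClique G K)
    (U : Set V) (hU : U.Nonempty) :
    ClawFree (G.induce U) ∧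
      ∀ c : (G.induce U).ConnectedComponent,
        ∃ K : Set U, IsSimplicialClique (G.induce U) K ∧
          ∀ v ∈ K, (G.induce U).connectedComponentMk v = c := by
  constructor
  · intro v a b c hva hvb hvc hab hac hbc hnab hnac hnbc
    exact hcf v a b c hva hvb hvc
      (fun h => hab (Subtype.ext h)) (fun h => hac (Subtype.ext h))
      (fun h => hbc (Subtype.ext h)) hnab hnac hnbc
  · intro c
    obtain ⟨u, rfl⟩ := c.exists_rep
    -- The component of `u` in `U`, as a set of vertices of `V`.
    set C : Set V := GComp G U (↑u) with hC
    have huC : (u : V) ∈ C := ⟨u.2, Relation.ReflTransGen.refl⟩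
    have hCU : C ⊆ U := fun x hx => hx.1
    have hCconn : GConnOn G C := by
      intro a ha b hb
      exact (con_lift ha.2 ha.1).trans (con_lift hb.2 hb.1).symm
    have hWconn : GConnOn G (Set.univ : Set V) := fun a _ b _ =>
      con_univ_of_reachable (hconn.preconnected a b)
    have hWsimp : ∃ K, GRelSimp G Set.univ K := by
      obtain ⟨K, hKne, hKcl, hKsimp⟩ := hsimp
      refine ⟨K, hKne, Set.subset_univ K, hKcl, fun x hx => ?_⟩
      refine (hKsimp x hx).subset ?_
      rintro y ⟨_, hyadj, hyK⟩
      exact ⟨hyadj, hyK⟩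
    obtain ⟨K, hKne, hKC, hKcl, hKsimp⟩ :=
      mainInd (Set.univ : Set V).ncard Set.univ C Set.finite_univ le_rfl hcf hWconn
        hWsimp ⟨↑u, huC⟩ (Set.subset_univ C) hCconn
    refine ⟨{y : U | (y : V) ∈ K}, ⟨?_, ?_, ?_⟩, ?_⟩
    · obtain ⟨k, hk⟩ := hKne
      exact ⟨⟨k, hCU (hKC hk)⟩, hk⟩
    · intro x hx y hy hxy
      exact hKcl hx hy (fun h => hxy (Subtype.ext h))
    · intro x hx a ha b hb hab
      have haK : (a : V) ∈ {y | y ∈ C ∧ G.Adj ↑x y ∧ y ∉ K} :=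
        ⟨comp_closed (hKC hx) a.2 ha.1, ha.1, ha.2⟩
      have hbK : (b : V) ∈ {y | y ∈ C ∧ G.Adj ↑x y ∧ y ∉ K} :=
        ⟨comp_closed (hKC hx) b.2 hb.1, hb.1, hb.2⟩
      exact hKsimp (↑x) hx haK hbK (fun h => hab (Subtype.ext h))
    · intro v hv
      have hvC : (v : V) ∈ C := hKC hv
      have : (G.induce U).Reachable ⟨↑v, v.2⟩ u := by
        have := reachable_of_con hvC.2 v.2 u.2
        convert this
      exact SimpleGraph.ConnectedComponent.sound (by simpa using this)
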